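/- Let φ be a Bernstein function. Then for every x > 0 and every real b, |φ(x + ib) − φ(x)| ≤ (|b|/x) φ(x). -/

import Mathlib

open MeasureTheory Set Filter

lemma abs_one_sub_exp_mul_I_le (θ : ℝ) :
    ‖1 - Complex.exp ((θ : ℂ) * Complex.I)‖ ≤ |θ| := by
  have hre : (1 - Complex.exp ((θ : ℂ) * Complex.I)).re = 1 - Real.cos θ := by
    simp [Complex.exp_ofReal_mul_I_re]
  have him : (1 - Complex.exp ((θ : ℂ) * Complex.I)).im = -Real.sin θ := by
    simp [Complex.exp_ofReal_mul_I_im]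
  rw [Complex.norm_def, Complex.normSq_apply, hre, him, ← Real.sqrt_sq_eq_abs]
  apply Real.sqrt_le_sqrt
  have h1 : 1 - θ ^ 2 / 2 ≤ Real.cos θ := Real.one_sub_sq_div_two_le_cos
  have h2 : Real.sin θ ^ 2 + Real.cos θ ^ 2 = 1 := Real.sin_sq_add_cos_sq θ
  nlinarith [h1, h2]

lemma exp_neg_mul_le (t : ℝ) (ht : 0 ≤ t) : t * Real.exp (-t) ≤ 1 - Real.exp (-t) := by
  have h := Real.add_one_le_exp t
  have he : 0 < Real.exp (-t) := Real.exp_pos _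
  have : (t + 1) * Real.exp (-t) ≤ Real.exp t * Real.exp (-t) :=
    mul_le_mul_of_nonneg_right h he.le
  rw [← Real.exp_add] at this
  simp at this
  nlinarith

theorem bernstein_vertical_increment_bound
    (q d : ℝ) (hq : 0 ≤ q) (hd : 0 ≤ d)
    (μ : Measure ℝ)
    (hμ : ∫⁻ y in Set.Ioi (0:ℝ), ENNReal.ofReal (min y 1) ∂μ < ⊤)
    (φ : ℂ → ℂ)
    (hφ : ∀ z : ℂ, 0 < z.re →
      φ z = (q : ℂ) + (d : ℂ) * z
        + ∫ y in Set.Ioi (0:ℝ), (1 - Complex.exp (-(z * (y : ℂ)))) ∂μ)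
    (hint : ∀ z : ℂ, 0 < z.re →
      IntegrableOn (fun y : ℝ => 1 - Complex.exp (-(z * (y : ℂ)))) (Set.Ioi 0) μ) :
    ∀ x : ℝ, 0 < x → ∀ b : ℝ,
      ‖φ ((x : ℂ) + (b : ℂ) * Complex.I) - φ (x : ℂ)‖
        ≤ (|b| / x) * (φ (x : ℂ)).re := by
  intro x hx b
  set z : ℂ := (x : ℂ) + (b : ℂ) * Complex.I with hzdef
  have hzre : 0 < z.re := by simp [hzdef, hx]
  have hxre : 0 < ((x : ℂ)).re := by simpa using hx
  have hI1 := hint z hzre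
  have hI0 := hint (x : ℂ) hxre
  rw [hφ z hzre, hφ (x : ℂ) hxre]
  have hdiff :
      (q : ℂ) + (d : ℂ) * z + ∫ y in Set.Ioi (0:ℝ), (1 - Complex.exp (-(z * (y : ℂ)))) ∂μ
        - ((q : ℂ) + (d : ℂ) * (x : ℂ)
            + ∫ y in Set.Ioi (0:ℝ), (1 - Complex.exp (-((x : ℂ) * (y : ℂ)))) ∂μ)
      = (d : ℂ) * ((b : ℂ) * Complex.I)
        + ∫ y in Set.Ioi (0:ℝ),
            ((1 - Complex.exp (-(z * (y : ℂ)))) - (1 - Complex.exp (-((x : ℂ) * (y : ℂ))))) ∂μ := by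
    rw [integral_sub hI1 hI0, hzdef]; ring
  rw [hdiff]
  -- The real-valued bound function
  set g : ℝ → ℝ := fun y => (|b| / x) * (1 - Real.exp (-(x * y))) with hgdef
  have hre0 : ∀ y : ℝ, ((1 : ℂ) - Complex.exp (-((x : ℂ) * (y : ℂ)))).re
      = 1 - Real.exp (-(x * y)) := by
    intro y
    have : -((x : ℂ) * (y : ℂ)) = ((-(x * y) : ℝ) : ℂ) := by push_cast; ring
    rw [this]
    simp only [Complex.sub_re, Complex.one_re, Complex.exp_ofReal_re]
  have hgint : IntegrableOn g (Set.Ioi (0:ℝ)) μ := by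
    have h := (hI0.re).const_mul (|b| / x)
    refine h.congr (Filter.Eventually.of_forall fun y => ?_)
    simp [hgdef, RCLike.re_to_complex, hre0 y]
  -- pointwise bound
  have hpt : ∀ y ∈ Set.Ioi (0:ℝ),
      ‖(1 - Complex.exp (-(z * (y : ℂ)))) - (1 - Complex.exp (-((x : ℂ) * (y : ℂ))))‖ ≤ g y := by
    intro y hy
    have hy0 : 0 < y := hy
    have hsplit : -(z * (y : ℂ)) = -((x : ℂ) * (y : ℂ)) + ((-(b * y) : ℝ) : ℂ) * Complex.I := by
      rw [hzdef]; push_cast; ring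
    have : (1 - Complex.exp (-(z * (y : ℂ)))) - (1 - Complex.exp (-((x : ℂ) * (y : ℂ))))
        = Complex.exp (-((x : ℂ) * (y : ℂ)))
            * (1 - Complex.exp (((-(b * y) : ℝ) : ℂ) * Complex.I)) := by
      rw [hsplit, Complex.exp_add]; ring
    rw [this]
    have habs : ‖Complex.exp (-((x : ℂ) * (y : ℂ)))‖ = Real.exp (-(x * y)) := by
      have : -((x : ℂ) * (y : ℂ)) = ((-(x * y) : ℝ) : ℂ) := by push_cast; ring
      rw [this, Complex.norm_exp_ofReal]
    rw [norm_mul, habs]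
    have h1 : ‖1 - Complex.exp (((-(b * y) : ℝ) : ℂ) * Complex.I)‖ ≤ |b * y| := by
      simpa using abs_one_sub_exp_mul_I_le (-(b * y))
    have h2 : Real.exp (-(x * y)) * |b * y| ≤ g y := by
      have hkey : (x * y) * Real.exp (-(x * y)) ≤ 1 - Real.exp (-(x * y)) :=
        exp_neg_mul_le (x * y) (by positivity)
      have hby : |b * y| = |b| * y := by rw [abs_mul, abs_of_pos hy0]
      have hgv : g y = |b| / x * (1 - Real.exp (-(x * y))) := rfl
      rw [hby, hgv, div_mul_eq_mul_div, le_div_iff₀ hx]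
      nlinarith [mul_le_mul_of_nonneg_left hkey (abs_nonneg b)]
    calc Real.exp (-(x * y)) * ‖1 - Complex.exp (((-(b * y) : ℝ) : ℂ) * Complex.I)‖
        ≤ Real.exp (-(x * y)) * |b * y| :=
          mul_le_mul_of_nonneg_left h1 (Real.exp_pos _).le
      _ ≤ g y := h2
  have hIbound : ‖∫ y in Set.Ioi (0:ℝ),
      ((1 - Complex.exp (-(z * (y : ℂ)))) - (1 - Complex.exp (-((x : ℂ) * (y : ℂ))))) ∂μ‖
      ≤ ∫ y in Set.Ioi (0:ℝ), g y ∂μ := by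
    refine norm_integral_le_of_norm_le hgint ?_
    filter_upwards [ae_restrict_mem measurableSet_Ioi] with y hy using hpt y hy
  -- compute real part of φ x
  have hre_int : (∫ y in Set.Ioi (0:ℝ), (1 - Complex.exp (-((x : ℂ) * (y : ℂ)))) ∂μ).re
      = ∫ y in Set.Ioi (0:ℝ), (1 - Real.exp (-(x * y))) ∂μ := by
    have h := integral_re hI0
    simp only [RCLike.re_to_complex] at h
    rw [← h]
    exact integral_congr_ae (Filter.Eventually.of_forall fun y => hre0 y)
  have hφre : ((q : ℂ) + (d : ℂ) * (x : ℂ)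
      + ∫ y in Set.Ioi (0:ℝ), (1 - Complex.exp (-((x : ℂ) * (y : ℂ)))) ∂μ).re
      = q + d * x + ∫ y in Set.Ioi (0:ℝ), (1 - Real.exp (-(x * y))) ∂μ := by
    simp [Complex.add_re, hre_int]
  rw [hφre]
  have htri : ‖(d : ℂ) * ((b : ℂ) * Complex.I)
      + ∫ y in Set.Ioi (0:ℝ),
          ((1 - Complex.exp (-(z * (y : ℂ)))) - (1 - Complex.exp (-((x : ℂ) * (y : ℂ))))) ∂μ‖
      ≤ d * |b| + ∫ y in Set.Ioi (0:ℝ), g y ∂μ := by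
    refine (norm_add_le _ _).trans (add_le_add ?_ hIbound)
    rw [norm_mul, norm_mul]
    simp [abs_of_nonneg hd]
  refine htri.trans ?_
  have hgval : ∫ y in Set.Ioi (0:ℝ), g y ∂μ
      = (|b| / x) * ∫ y in Set.Ioi (0:ℝ), (1 - Real.exp (-(x * y))) ∂μ := by
    rw [hgdef]
    exact integral_const_mul _ _
  rw [hgval]
  have hqb : 0 ≤ (|b| / x) * q := by positivity
  have hdb : d * |b| = (|b| / x) * (d * x) := by field_simp
  nlinarith [hqb]
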